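/- For ξ, η ∈ ℝ with (ξ,η) ≠ (0,0) and (ξ',η') ≠ (0,0), the 3-dimensional non-unimodular Lie algebras 𝔤(ξ,η) and 𝔤(ξ',η') with bases {e₁,e₂,e₃} satisfying [e₁,e₂] = (1+ξ)(e₂ + ηe₃), [e₂,e₃] = 0, [e₃,e₁] = (1−ξ)(ηe₂ − e₃) are isomorphic as Lie algebras if and only if their Milnor invariants agree: (1−ξ²)(1+η²) = (1−ξ'²)(1+η'²). -/

import Mathlib

open LinearMap LieAlgebra

section
variable {L : Type*} [LieRing L] [LieAlgebra ℝ L]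

lemma adMatrix (ξ η : ℝ) (e : Module.Basis (Fin 3) ℝ L)
    (hb1 : ⁅e 0, e 1⁆ = (1 + ξ) • (e 1 + η • e 2))
    (hb2 : ⁅e 1, e 2⁆ = 0)
    (hb3 : ⁅e 2, e 0⁆ = (1 - ξ) • (η • e 1 - e 2)) (x : L) :
    LinearMap.toMatrix e e (ad ℝ L x) =
      !![0, 0, 0;
         -(e.repr x 1)*(1+ξ) + (e.repr x 2)*(1-ξ)*η, (e.repr x 0)*(1+ξ), -(e.repr x 0)*(1-ξ)*η;
         -(e.repr x 1)*(1+ξ)*η - (e.repr x 2)*(1-ξ), (e.repr x 0)*(1+ξ)*η, (e.repr x 0)*(1-ξ)] := by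
  have hx : (e.repr x 0) • e 0 + (e.repr x 1) • e 1 + (e.repr x 2) • e 2 = x := by
    have := e.sum_repr x
    rwa [Fin.sum_univ_three] at this
  have h10 : ⁅e 1, e 0⁆ = -((1 + ξ) • (e 1 + η • e 2)) := by rw [← lie_skew, hb1]
  have h02 : ⁅e 0, e 2⁆ = -((1 - ξ) • (η • e 1 - e 2)) := by rw [← lie_skew, hb3]
  have h21 : ⁅e 2, e 1⁆ = 0 := by rw [← lie_skew, hb2, neg_zero]
  have c0 : ⁅x, e 0⁆ = (-(e.repr x 1)*(1+ξ) + (e.repr x 2)*(1-ξ)*η) • e 1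
      + (-(e.repr x 1)*(1+ξ)*η - (e.repr x 2)*(1-ξ)) • e 2 := by
    conv_lhs => rw [← hx]
    rw [add_lie, add_lie, smul_lie, smul_lie, smul_lie, lie_self, h10, hb3]
    module
  have c1 : ⁅x, e 1⁆ = ((e.repr x 0)*(1+ξ)) • e 1 + ((e.repr x 0)*(1+ξ)*η) • e 2 := by
    conv_lhs => rw [← hx]
    rw [add_lie, add_lie, smul_lie, smul_lie, smul_lie, lie_self, hb1, h21]
    module
  have c2 : ⁅x, e 2⁆ = (-(e.repr x 0)*(1-ξ)*η) • e 1 + ((e.repr x 0)*(1-ξ)) • e 2 := by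
    conv_lhs => rw [← hx]
    rw [add_lie, add_lie, smul_lie, smul_lie, smul_lie, lie_self, hb2, h02]
    module
  ext i j
  rw [LinearMap.toMatrix_apply, ad_apply]
  fin_cases j <;> fin_cases i <;>
    simp [c0, c1, c2, Finsupp.single_apply]

lemma trace_ad (ξ η : ℝ) (e : Module.Basis (Fin 3) ℝ L)
    (hb1 : ⁅e 0, e 1⁆ = (1 + ξ) • (e 1 + η • e 2))
    (hb2 : ⁅e 1, e 2⁆ = 0)
    (hb3 : ⁅e 2, e 0⁆ = (1 - ξ) • (η • e 1 - e 2)) (x : L) :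
    LinearMap.trace ℝ L (ad ℝ L x) = 2 * e.repr x 0 := by
  rw [LinearMap.trace_eq_matrix_trace ℝ e, adMatrix ξ η e hb1 hb2 hb3 x, Matrix.trace,
    Fin.sum_univ_three]
  simp [Matrix.diag]
  ring

lemma trace_ad_sq (ξ η : ℝ) (e : Module.Basis (Fin 3) ℝ L)
    (hb1 : ⁅e 0, e 1⁆ = (1 + ξ) • (e 1 + η • e 2))
    (hb2 : ⁅e 1, e 2⁆ = 0)
    (hb3 : ⁅e 2, e 0⁆ = (1 - ξ) • (η • e 1 - e 2)) (x : L) :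
    LinearMap.trace ℝ L (ad ℝ L x ∘ₗ ad ℝ L x)
      = (e.repr x 0)^2 * (4 - 2 * ((1 - ξ^2) * (1 + η^2))) := by
  rw [LinearMap.trace_eq_matrix_trace ℝ e, LinearMap.toMatrix_comp e e e,
    adMatrix ξ η e hb1 hb2 hb3 x, Matrix.trace, Fin.sum_univ_three]
  simp [Matrix.diag, Matrix.mul_apply, Fin.sum_univ_three]
  ring

end

section
variable {L : Type*} [LieRing L] [LieAlgebra ℝ L]

lemma buildAux (ξ η : ℝ) (e : Module.Basis (Fin 3) ℝ L)
    (hb1 : ⁅e 0, e 1⁆ = (1 + ξ) • (e 1 + η • e 2))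
    (hb2 : ⁅e 1, e 2⁆ = 0)
    (hb3 : ⁅e 2, e 0⁆ = (1 - ξ) • (η • e 1 - e 2))
    (α β : ℝ) (hd : η * (α^2*(1+ξ) + β^2*(1-ξ)) - 2*α*β*ξ ≠ 0) :
    ∃ f : Module.Basis (Fin 3) ℝ L, ⁅f 0, f 1⁆ = f 2 ∧
      ⁅f 0, f 2⁆ = (2:ℝ) • f 2 - ((1-ξ^2)*(1+η^2)) • f 1 ∧ ⁅f 1, f 2⁆ = 0 := by
  set γ : ℝ := α*(1+ξ) - β*(1-ξ)*η with hγ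
  set δ : ℝ := α*(1+ξ)*η + β*(1-ξ) with hδ
  set P : Matrix (Fin 3) (Fin 3) ℝ := !![1,0,0; 0,α,γ; 0,β,δ] with hP
  have hdet : P.det = α*δ - β*γ := by
    simp [hP, Matrix.det_fin_three]
    ring
  have hdet' : IsUnit P.det := by
    rw [hdet]
    refine isUnit_iff_ne_zero.mpr ?_
    intro h
    apply hd
    rw [← h, hγ, hδ]; ring
  let f : Module.Basis (Fin 3) ℝ L := e.map (Matrix.toLinearEquiv e P hdet')
  have hf : ∀ j, f j = ∑ i, P i j • e i := by
    intro j
    simp [f, Matrix.toLinearEquiv_apply, Matrix.toLin_self]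
  have hf0 : f 0 = e 0 := by
    rw [hf, Fin.sum_univ_three]
    show (1:ℝ) • e 0 + (0:ℝ) • e 1 + (0:ℝ) • e 2 = e 0
    module
  have hf1 : f 1 = α • e 1 + β • e 2 := by
    rw [hf, Fin.sum_univ_three]
    show (0:ℝ) • e 0 + α • e 1 + β • e 2 = α • e 1 + β • e 2
    module
  have hf2 : f 2 = γ • e 1 + δ • e 2 := by
    rw [hf, Fin.sum_univ_three]
    show (0:ℝ) • e 0 + γ • e 1 + δ • e 2 = γ • e 1 + δ • e 2
    module
  have h02 : ⁅e 0, e 2⁆ = -((1 - ξ) • (η • e 1 - e 2)) := by rw [← lie_skew, hb3]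
  have h21 : ⁅e 2, e 1⁆ = 0 := by rw [← lie_skew, hb2, neg_zero]
  refine ⟨f, ?_, ?_, ?_⟩
  · rw [hf0, hf1, hf2, lie_add, lie_smul, lie_smul, hb1, h02, hγ, hδ]
    module
  · rw [hf0, hf1, hf2, lie_add, lie_smul, lie_smul, hb1, h02, hγ, hδ]
    module
  · rw [hf1, hf2, lie_add, add_lie, add_lie, lie_smul, lie_smul, lie_smul, lie_smul,
      smul_lie, smul_lie, smul_lie, smul_lie, lie_self, lie_self, hb2, h21]
    simp

lemma buildBasis (ξ η : ℝ) (e : Module.Basis (Fin 3) ℝ L)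
    (hb1 : ⁅e 0, e 1⁆ = (1 + ξ) • (e 1 + η • e 2))
    (hb2 : ⁅e 1, e 2⁆ = 0)
    (hb3 : ⁅e 2, e 0⁆ = (1 - ξ) • (η • e 1 - e 2))
    (hne : (ξ, η) ≠ (0, 0)) :
    ∃ f : Module.Basis (Fin 3) ℝ L, ⁅f 0, f 1⁆ = f 2 ∧
      ⁅f 0, f 2⁆ = (2:ℝ) • f 2 - ((1-ξ^2)*(1+η^2)) • f 1 ∧ ⁅f 1, f 2⁆ = 0 := by
  by_cases hη : η = 0
  · have hξ : ξ ≠ 0 := by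
      intro h; exact hne (by rw [h, hη])
    exact buildAux ξ η e hb1 hb2 hb3 1 1 (by subst hη; simpa using by intro h; apply hξ; linarith)
  · by_cases hξ : ξ = -1
    · refine buildAux ξ η e hb1 hb2 hb3 0 1 ?_
      subst hξ
      intro h
      apply hη
      nlinarith
    · refine buildAux ξ η e hb1 hb2 hb3 1 0 ?_
      intro h
      have : η * (1 + ξ) = 0 := by linarith [h]
      rcases mul_eq_zero.mp this with h1 | h2
      · exact hη h1
      · exact hξ (by linarith)
end


/-- The 3-dimensional non-unimodular Lie algebras 𝔤(ξ,η) with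
basis {e₁,e₂,e₃} and brackets [e₁,e₂] = (1+ξ)(e₂+ηe₃), [e₂,e₃] = 0,
[e₃,e₁] = (1−ξ)(ηe₂−e₃) (for (ξ,η) ≠ (0,0)) are isomorphic iff their Milnor
invariants 𝒟 = (1−ξ²)(1+η²) agree. -/
theorem statement16
    (ξ η ξ' η' : ℝ)
    (hne : (ξ, η) ≠ (0, 0)) (hne' : (ξ', η') ≠ (0, 0))
    (L L' : Type*) [LieRing L] [LieAlgebra ℝ L] [LieRing L'] [LieAlgebra ℝ L']
    (e : Module.Basis (Fin 3) ℝ L) (e' : Module.Basis (Fin 3) ℝ L')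
    -- brackets of 𝔤(ξ,η)
    (hb1 : ⁅e 0, e 1⁆ = (1 + ξ) • (e 1 + η • e 2))
    (hb2 : ⁅e 1, e 2⁆ = 0)
    (hb3 : ⁅e 2, e 0⁆ = (1 - ξ) • (η • e 1 - e 2))
    -- brackets of 𝔤(ξ',η')
    (hb1' : ⁅e' 0, e' 1⁆ = (1 + ξ') • (e' 1 + η' • e' 2))
    (hb2' : ⁅e' 1, e' 2⁆ = 0)
    (hb3' : ⁅e' 2, e' 0⁆ = (1 - ξ') • (η' • e' 1 - e' 2)) :
    Nonempty (L ≃ₗ⁅ℝ⁆ L') ↔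
      (1 - ξ^2) * (1 + η^2) = (1 - ξ'^2) * (1 + η'^2) := by
  constructor
  · rintro ⟨φ⟩
    have h1 : LinearMap.trace ℝ L (ad ℝ L (e 0)) = 2 := by
      rw [trace_ad ξ η e hb1 hb2 hb3]; simp
    have h2 : LinearMap.trace ℝ L (ad ℝ L (e 0) ∘ₗ ad ℝ L (e 0))
        = 4 - 2 * ((1 - ξ^2) * (1 + η^2)) := by
      rw [trace_ad_sq ξ η e hb1 hb2 hb3]; simp
    have hconj : ∀ x : L, ad ℝ L' (φ x) = (φ.toLinearEquiv).conj (ad ℝ L x) := by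
      intro x; ext y
      simp only [ad_apply, LinearEquiv.conj_apply, LinearMap.comp_apply,
        LinearEquiv.coe_coe]
      have hz : φ (φ.toLinearEquiv.symm y) = y := φ.toLinearEquiv.apply_symm_apply y
      calc ⁅φ x, y⁆ = ⁅φ x, φ (φ.toLinearEquiv.symm y)⁆ := by rw [hz]
        _ = φ.toLieHom ⁅x, φ.toLinearEquiv.symm y⁆ := (LieHom.map_lie _ _ _).symm
    have t1 : LinearMap.trace ℝ L' (ad ℝ L' (φ (e 0))) = 2 := by
      rw [hconj, LinearMap.trace_conj', h1]
    have t2 : LinearMap.trace ℝ L' (ad ℝ L' (φ (e 0)) ∘ₗ ad ℝ L' (φ (e 0)))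
        = 4 - 2 * ((1 - ξ^2) * (1 + η^2)) := by
      rw [hconj, ← LinearEquiv.conj_comp, LinearMap.trace_conj', h2]
    rw [trace_ad ξ' η' e' hb1' hb2' hb3'] at t1
    rw [trace_ad_sq ξ' η' e' hb1' hb2' hb3'] at t2
    have hr : e'.repr (φ (e 0)) 0 = 1 := by linarith
    rw [hr] at t2
    nlinarith [t2]
  · intro hD
    obtain ⟨f, r1, r2, r3⟩ := buildBasis ξ η e hb1 hb2 hb3 hne
    obtain ⟨f', r1', r2', r3'⟩ := buildBasis ξ' η' e' hb1' hb2' hb3' hne'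
    rw [hD] at r2
    set D := (1 - ξ'^2) * (1 + η'^2) with hDdef
    set g : L ≃ₗ[ℝ] L' := f.equiv f' (Equiv.refl _) with hg
    have hgf : ∀ i, g (f i) = f' i := fun i => by
      simp [hg, Module.Basis.equiv_apply]
    have s1 : ⁅f 1, f 0⁆ = -f 2 := by rw [← lie_skew, r1]
    have s2 : ⁅f 2, f 0⁆ = -((2:ℝ) • f 2 - D • f 1) := by rw [← lie_skew, r2]
    have s3 : ⁅f 2, f 1⁆ = 0 := by rw [← lie_skew, r3, neg_zero]
    have s1' : ⁅f' 1, f' 0⁆ = -f' 2 := by rw [← lie_skew, r1']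
    have s2' : ⁅f' 2, f' 0⁆ = -((2:ℝ) • f' 2 - D • f' 1) := by rw [← lie_skew, r2']
    have s3' : ⁅f' 2, f' 1⁆ = 0 := by rw [← lie_skew, r3', neg_zero]
    have hlie : ∀ x y : L, g ⁅x, y⁆ = ⁅g x, g y⁆ := by
      let B1 : L →ₗ[ℝ] L →ₗ[ℝ] L' := LinearMap.mk₂ ℝ (fun x y => g ⁅x, y⁆)
        (fun x y z => by simp [add_lie]) (fun c x y => by simp [smul_lie])
        (fun x y z => by simp [lie_add]) (fun c x y => by simp [lie_smul])
      let B2 : L →ₗ[ℝ] L →ₗ[ℝ] L' := LinearMap.mk₂ ℝ (fun x y => ⁅g x, g y⁆)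
        (fun x y z => by simp [add_lie]) (fun c x y => by simp [smul_lie])
        (fun x y z => by simp [lie_add]) (fun c x y => by simp [lie_smul])
      have hB : B1 = B2 := by
        apply LinearMap.ext_basis f f
        intro i j
        show g ⁅f i, f j⁆ = ⁅g (f i), g (f j)⁆
        fin_cases i <;> fin_cases j <;>
          simp [hgf, r1, r2, r3, s1, s2, s3, r1', r2', r3', s1', s2', s3']
      intro x y
      exact DFunLike.congr_fun (LinearMap.congr_fun hB x) y
    exact ⟨{ toLinearMap := (g : L →ₗ[ℝ] L'), map_lie' := fun {x y} => hlie x y,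
             invFun := g.symm, left_inv := g.left_inv, right_inv := g.right_inv }⟩
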